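/- For integers a,b,c with m = min(a,b,c), the formal Laurent series J_Δ(a,b,c) has lowest q-degree equal to ((a-m)(b-m) + (b-m)(c-m) + (c-m)(a-m) - m)/2 and the coefficient of the lowest degree term is (-1)^m. -/

import Mathlib

open Finset

/-- The formal variable `T = q^{1/2}`: formal Laurent series in `q^{1/2}` are Laurent
series in `T`, with `q = T^2`. -/
noncomputable def Thalf : LaurentSeries ℚ := HahnSeries.single 1 1

/-- The q-Pochhammer symbol `(q)_n = Π_{i=1}^n (1 - q^i)`, with `q = T^2`. -/
noncomputable def qPoch (n : ℕ) : LaurentSeries ℚ :=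
  ∏ i ∈ Finset.range n, (1 - Thalf ^ (2 * (i + 1) : ℤ))

/-- The tetrahedron index
`I_Δ(m,e) = Σ_{n = max(0,-e)}^∞ (-1)^n q^{n(n+1)/2 - (n+e/2)m} / ((q)_n (q)_{n+e})`
as a formal Laurent series in `q^{1/2} = T`. -/
noncomputable def Itet (m e : ℤ) : LaurentSeries ℚ :=
  ∑' k : ℕ,
    (fun n : ℕ =>
      (-1 : LaurentSeries ℚ) ^ n *
        Thalf ^ ((n : ℤ) * (n + 1) - (2 * n + e) * m) /
        (qPoch n * qPoch ((n : ℤ) + e).toNat))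
    (k + (max 0 (-e)).toNat)

/-- `J_Δ(a,b,c) = (-q^{1/2})^{-b} I_Δ(b-c, a-b)`. -/
noncomputable def Jtet (a b c : ℤ) : LaurentSeries ℚ :=
  (-Thalf) ^ (-b) * Itet (b - c) (a - b)

namespace TetProof

open HahnSeries

abbrev L := LaurentSeries ℚ

theorem Thalf_ne : (Thalf : L) ≠ 0 := by
  have : (Thalf : L).coeff 1 = 1 := by simp [Thalf]
  intro h; rw [h] at this; simp at this

theorem single_one_mul (a b : ℤ) (r s : ℚ) :
    (HahnSeries.single a r : L) * HahnSeries.single b s = HahnSeries.single (a + b) (r * s) :=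
  HahnSeries.single_mul_single

theorem Tzpow (z : ℤ) : (Thalf : L) ^ z = HahnSeries.single z 1 := by
  have hnat : ∀ n : ℕ, (Thalf : L) ^ (n : ℤ) = HahnSeries.single (n : ℤ) 1 := by
    intro n
    rw [zpow_natCast, Thalf, HahnSeries.single_pow]
    norm_num
  cases z with
  | ofNat n => exact hnat n
  | negSucc n =>
    have h1 : (Thalf : L) ^ ((n + 1 : ℕ) : ℤ) = HahnSeries.single ((n+1 : ℕ) : ℤ) 1 := hnat (n+1)
    have h2 : (HahnSeries.single ((n+1 : ℕ) : ℤ) 1 : L) * HahnSeries.single (Int.negSucc n) 1 = 1 := by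
      rw [single_one_mul]
      have : ((n+1 : ℕ) : ℤ) + Int.negSucc n = 0 := by
        rw [Int.negSucc_eq]; push_cast; ring
      rw [this]
      norm_num
    have : (Thalf : L) ^ (Int.negSucc n) = ((Thalf : L) ^ ((n+1 : ℕ) : ℤ))⁻¹ := by
      have h3 : Int.negSucc n = -((n+1 : ℕ) : ℤ) := by
        rw [Int.negSucc_eq]; push_cast; ring
      rw [h3, ← zpow_neg]
    rw [this, h1]
    exact inv_eq_of_mul_eq_one_left (by rw [mul_comm]; exact h2)

theorem Tzpow_mul (x y : ℤ) : (Thalf : L) ^ x * Thalf ^ y = Thalf ^ (x + y) :=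
  (zpow_add₀ Thalf_ne x y).symm

theorem negOne_pow_eq (n : ℕ) : ((-1 : L)) ^ n = HahnSeries.single (0 : ℤ) ((-1 : ℚ) ^ n) := by
  have h1 : ((-1 : L)) = HahnSeries.single (0 : ℤ) ((-1 : ℚ)) := by
    ext d
    by_cases hd : d = (0 : ℤ) <;> simp [HahnSeries.coeff_single, hd, HahnSeries.coeff_one]
  rw [h1, HahnSeries.single_pow]
  norm_num

/-- `Mon f`: `f` has order `0` and leading coefficient `1`. -/
def Mon (f : L) : Prop := f.coeff 0 = 1 ∧ ∀ d < (0 : ℤ), f.coeff d = 0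

theorem Mon.ne_zero {f : L} (hf : Mon f) : f ≠ 0 := by
  intro h; have := hf.1; rw [h] at this; simp at this

theorem order_eq_of_coeff {f : L} {d0 : ℤ} (h0 : f.coeff d0 ≠ 0)
    (h : ∀ d < d0, f.coeff d = 0) : f.order = d0 := by
  have hf : f ≠ 0 := by intro hh; rw [hh] at h0; simp at h0
  refine le_antisymm (HahnSeries.order_le_of_coeff_ne_zero h0) ?_
  by_contra hlt
  push_neg at hlt
  have hne := HahnSeries.leadingCoeff_ne_zero.mpr hf
  rw [HahnSeries.leadingCoeff_eq] at hne
  exact hne (h _ hlt)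

theorem Mon.order {f : L} (hf : Mon f) : f.order = 0 :=
  order_eq_of_coeff (by rw [hf.1]; norm_num) hf.2

theorem Mon.leadingCoeff {f : L} (hf : Mon f) : f.leadingCoeff = 1 := by
  rw [HahnSeries.leadingCoeff_eq,
    hf.order, hf.1]

theorem Mon.one : Mon (1 : L) := by
  constructor
  · simp [HahnSeries.coeff_one]
  · intro d hd; simp [HahnSeries.coeff_one]; omega

theorem Mon.mul {f g : L} (hf : Mon f) (hg : Mon g) : Mon (f * g) := by
  have horder : (f * g).order = 0 := by
    rw [HahnSeries.order_mul hf.ne_zero hg.ne_zero, hf.order, hg.order]; ring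
  have hc : (f * g).coeff 0 = 1 := by
    have := HahnSeries.coeff_mul_order_add_order f g
    rw [hf.order, hg.order, hf.leadingCoeff, hg.leadingCoeff] at this
    simpa using this
  refine ⟨hc, fun d hd => ?_⟩
  apply HahnSeries.coeff_eq_zero_of_lt_order
  rw [horder]; exact hd

theorem Mon.inv {f : L} (hf : Mon f) : Mon f⁻¹ := by
  have hinv : f * f⁻¹ = 1 := mul_inv_cancel₀ hf.ne_zero
  have hne : f⁻¹ ≠ 0 := inv_ne_zero hf.ne_zero
  have horder : f⁻¹.order = 0 := by
    have h1 : (f * f⁻¹).order = (0 : ℤ) := by rw [hinv]; exact (Mon.one).order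
    rw [HahnSeries.order_mul hf.ne_zero hne, hf.order] at h1
    omega
  have hc : f⁻¹.coeff 0 = 1 := by
    have := HahnSeries.coeff_mul_order_add_order f f⁻¹
    rw [hf.order, horder, hf.leadingCoeff, hinv] at this
    simp only [HahnSeries.leadingCoeff_eq, horder] at this
    simpa using this.symm
  refine ⟨hc, fun d hd => ?_⟩
  apply HahnSeries.coeff_eq_zero_of_lt_order
  rw [horder]; exact hd

theorem Mon.factor (k : ℤ) (hk : 0 < k) : Mon ((1 : L) - Thalf ^ k) := by
  constructor
  · have h0 : (0 : ℤ) ≠ k := by omega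
    rw [HahnSeries.coeff_sub, Tzpow]
    simp [HahnSeries.coeff_one, HahnSeries.coeff_single, h0]
  · intro d hd
    have h1 : d ≠ (0 : ℤ) := by omega
    have h2 : d ≠ k := by omega
    rw [HahnSeries.coeff_sub, Tzpow]
    simp [HahnSeries.coeff_one, HahnSeries.coeff_single, h1, h2]

theorem mon_qPoch (n : ℕ) : Mon (qPoch n) := by
  induction n with
  | zero => simpa [qPoch] using Mon.one
  | succ n ih =>
    rw [qPoch, Finset.prod_range_succ, ← qPoch]
    exact ih.mul (Mon.factor _ (by positivity))


theorem single_neg' (a : ℤ) (r : ℚ) :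
    (HahnSeries.single a (-r) : L) = -HahnSeries.single a r := by
  ext d
  by_cases hd : d = a <;> simp [HahnSeries.coeff_single, hd]

/-- Normal form for the summands. -/
noncomputable def ter (s : ℚ) (z : ℤ) (u v : ℕ) : L :=
  HahnSeries.single (0:ℤ) s * Thalf ^ z / (qPoch u * qPoch v)

theorem mon_den (u v : ℕ) : Mon (qPoch u * qPoch v) := (mon_qPoch u).mul (mon_qPoch v)

theorem ter_eq_single_mul (s : ℚ) (z : ℤ) (u v : ℕ) :
    ter s z u v = HahnSeries.single z s * (qPoch u * qPoch v)⁻¹ := by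
  rw [ter, div_eq_mul_inv, Tzpow, single_one_mul]
  norm_num

theorem ter_coeff (s : ℚ) (z : ℤ) (u v : ℕ) (d : ℤ) :
    (ter s z u v).coeff d = s * (qPoch u * qPoch v)⁻¹.coeff (d - z) := by
  rw [ter_eq_single_mul]
  have h2 := HahnSeries.coeff_single_mul_add (r := s) (x := (qPoch u * qPoch v)⁻¹)
    (a := d - z) (b := z)
  rw [show d - z + z = d by ring] at h2
  exact h2

theorem ter_coeff_lt {d z : ℤ} (s : ℚ) (u v : ℕ) (hd : d < z) :
    (ter s z u v).coeff d = 0 := by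
  rw [ter_coeff, (mon_den u v).inv.2 _ (by omega)]
  ring

theorem ter_coeff_self (s : ℚ) (z : ℤ) (u v : ℕ) :
    (ter s z u v).coeff z = s := by
  rw [ter_coeff, sub_self, (mon_den u v).inv.1, mul_one]

theorem ter_mul_T (s : ℚ) (z w : ℤ) (u v : ℕ) :
    ter s z u v * Thalf ^ w = ter s (z + w) u v := by
  rw [ter, ter, div_eq_mul_inv, div_eq_mul_inv, ← Tzpow_mul]
  ring

theorem T_mul_ter (s : ℚ) (z w : ℤ) (u v : ℕ) :
    Thalf ^ w * ter s z u v = ter s (w + z) u v := by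
  rw [ter, ter, div_eq_mul_inv, div_eq_mul_inv, ← Tzpow_mul]
  ring

theorem smul_ter (c s : ℚ) (z : ℤ) (u v : ℕ) :
    HahnSeries.single (0:ℤ) c * ter s z u v = ter (c * s) z u v := by
  rw [ter, ter, div_eq_mul_inv, div_eq_mul_inv, ← mul_assoc, ← mul_assoc, single_one_mul]
  norm_num

theorem neg_ter (s : ℚ) (z : ℤ) (u v : ℕ) :
    -ter s z u v = ter (-s) z u v := by
  rw [ter, ter, single_neg']
  ring

theorem factor_mul_ter (s : ℚ) (z : ℤ) (u v : ℕ) :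
    (1 - Thalf ^ (2 * ((u:ℤ) + 1))) * ter s z (u+1) v = ter s z u v := by
  have hq : qPoch (u+1) = qPoch u * (1 - Thalf ^ (2 * ((u:ℤ) + 1))) := by
    rw [qPoch, Finset.prod_range_succ, ← qPoch]
  have hF : ((1:L) - Thalf ^ (2 * ((u:ℤ) + 1))) ≠ 0 := (Mon.factor _ (by positivity)).ne_zero
  have hden : (qPoch u * qPoch v : L) ≠ 0 := (mon_den u v).ne_zero
  have hden' : (qPoch (u+1) * qPoch v : L) ≠ 0 := (mon_den (u+1) v).ne_zero
  have key : (qPoch (u+1) * qPoch v : L)⁻¹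
      = (1 - Thalf ^ (2 * ((u:ℤ) + 1)))⁻¹ * (qPoch u * qPoch v)⁻¹ := by
    rw [hq, mul_inv, mul_inv, mul_inv]
    ring
  rw [ter_eq_single_mul, ter_eq_single_mul, key]
  have hrearr : ∀ F Fi X Y : L, F * (X * (Fi * Y)) = F * Fi * (X * Y) := by intros; ring
  rw [hrearr, mul_inv_cancel₀ hF, one_mul]


/-- The summand of the tetrahedron index, and its order. -/
noncomputable def tm (m e : ℤ) (n : ℕ) : L :=
  (-1 : LaurentSeries ℚ) ^ n *
    Thalf ^ ((n : ℤ) * (n + 1) - (2 * n + e) * m) /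
    (qPoch n * qPoch ((n : ℤ) + e).toNat)

def del (m e : ℤ) (n : ℕ) : ℤ := (n : ℤ) * ((n : ℤ) + 1) - (2 * (n : ℤ) + e) * m

theorem Itet_eq (m e : ℤ) : Itet m e = ∑' k : ℕ, tm m e (k + (max 0 (-e)).toNat) := rfl

theorem tm_eq_ter (m e : ℤ) (n : ℕ) :
    tm m e n = ter ((-1:ℚ)^n) (del m e n) n ((n : ℤ) + e).toNat := by
  rw [tm, ter, negOne_pow_eq, del]

theorem tm_split (m e : ℤ) (n : ℕ) :
    tm m e n = tm m e n * (1 - Thalf ^ (2 * (n:ℤ))) + tm m e n * Thalf ^ (2 * (n:ℤ)) := by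
  ring

theorem T2 (m e : ℤ) (n : ℕ) :
    tm m e n * Thalf ^ (2 * (n:ℤ)) = Thalf ^ (-e) * tm (m-1) e n := by
  rw [tm_eq_ter, tm_eq_ter, ter_mul_T, T_mul_ter,
    show del m e n + 2*(n:ℤ) = -e + del (m-1) e n from by rw [del, del]; ring]

theorem T1 (m e : ℤ) (n : ℕ) :
    tm m e (n+1) * (1 - Thalf ^ (2 * ((n:ℤ) + 1))) =
      -(Thalf ^ (1 - m - e) * tm (m-1) (e+1) n) := by
  calc tm m e (n+1) * (1 - Thalf ^ (2 * ((n:ℤ) + 1)))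
      = (1 - Thalf ^ (2 * ((n:ℤ) + 1))) *
          ter ((-1:ℚ)^(n+1)) (del m e (n+1)) (n+1) (((n+1:ℕ):ℤ) + e).toNat := by
        rw [tm_eq_ter]; ring
    _ = ter ((-1:ℚ)^(n+1)) (del m e (n+1)) n (((n+1:ℕ):ℤ) + e).toNat :=
        factor_mul_ter _ _ _ _
    _ = ter (-(-1:ℚ)^n) ((1-m-e) + del (m-1) (e+1) n) n ((n:ℤ) + (e+1)).toNat := by
        rw [show ((((n+1:ℕ)):ℤ) + e).toNat = ((n:ℤ) + (e+1)).toNat from by push_cast; ring_nf,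
          show ((-1:ℚ))^(n+1) = -(-1:ℚ)^n from by rw [pow_succ]; ring,
          show del m e (n+1) = (1-m-e) + del (m-1) (e+1) n from by
            rw [del, del]; push_cast; ring]
    _ = -(Thalf ^ (1 - m - e) * tm (m-1) (e+1) n) := by
        rw [tm_eq_ter, T_mul_ter, neg_ter]

theorem tm_coeff_lt (m e : ℤ) (n : ℕ) {d : ℤ} (hd : d < del m e n) :
    (tm m e n).coeff d = 0 := by
  rw [tm_eq_ter]; exact ter_coeff_lt _ _ _ hd

theorem tm_coeff_self (m e : ℤ) (n : ℕ) :
    (tm m e n).coeff (del m e n) = (-1:ℚ)^n := by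
  rw [tm_eq_ter]; exact ter_coeff_self _ _ _ _


instance : NonarchimedeanAddGroup L := by
  constructor
  intro U hU
  rcases Valued.mem_nhds_zero.mp hU with ⟨γ, hγ⟩
  refine ⟨⟨Valued.v.ltAddSubgroup
    (Units.map (MonoidWithZeroHom.ValueGroup₀.embedding (f := (.ofClass (Valued.v (R := L))))) γ),
    ?_⟩, fun x hx => ?_⟩
  · exact AddSubgroup.isOpen_of_mem_nhds _ (Valued.mem_nhds_zero.mpr
      ⟨γ, fun x hx => Valued.v.restrict_lt_iff_lt_embedding.mp hx⟩)
  · exact hγ (Valued.v.restrict_lt_iff_lt_embedding.mpr hx)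

theorem coeff_loc_const (d : ℤ) (f : L) :
    {g : L | g.coeff d = f.coeff d} ∈ nhds f := by
  letI : UniformSpace ℚ := ⊥
  haveI : DiscreteTopology ℚ := ⟨rfl⟩
  have h := ((LaurentSeries.uniformContinuous_coeff (K := ℚ) d).continuous.tendsto f)
  rw [nhds_discrete ℚ] at h
  exact Filter.tendsto_pure.mp h

noncomputable def coeffHom (d : ℤ) : L →+ ℚ where
  toFun f := f.coeff d
  map_zero' := by simp
  map_add' f g := by simp [HahnSeries.coeff_add]

theorem coeff_continuous (d : ℤ) : Continuous fun f : L => f.coeff d := by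
  refine continuous_iff_continuousAt.mpr fun f => ?_
  exact Filter.Tendsto.congr'
    (Filter.eventuallyEq_of_mem (coeff_loc_const d f) fun g hg => hg.symm)
    tendsto_const_nhds

theorem coeff_tsum {f : ℕ → L} (hf : Summable f) (d : ℤ) :
    (∑' k, f k).coeff d = ∑' k, (f k).coeff d :=
  ((hf.hasSum.map (coeffHom d) (coeff_continuous d)).tsum_eq).symm

theorem del_ge (m e B : ℤ) : ∃ N : ℕ, ∀ k : ℕ, N ≤ k → B ≤ del m e k := by
  refine ⟨(max (2*m) (B + e*m)).toNat, fun k hk => ?_⟩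
  have h1 : (max (2*m) (B + e*m)) ≤ (k:ℤ) :=
    le_trans (Int.self_le_toNat _) (by exact_mod_cast hk)
  have h2 : 2*m ≤ (k:ℤ) := le_trans (le_max_left _ _) h1
  have h3 : B + e*m ≤ (k:ℤ) := le_trans (le_max_right _ _) h1
  have h4 : (k:ℤ) * 1 ≤ (k:ℤ) * ((k:ℤ) + 1 - 2*m) := by
    apply mul_le_mul_of_nonneg_left _ (by positivity)
    omega
  have h5 : (k:ℤ)*((k:ℤ)+1-2*m) = (k:ℤ)*((k:ℤ)+1) - 2*(k:ℤ)*m := by ring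
  rw [del]
  nlinarith

theorem summable_tm (m e : ℤ) (c : ℕ) : Summable (fun k : ℕ => tm m e (k + c)) := by
  apply NonarchimedeanAddGroup.summable_of_tendsto_cofinite_zero
  rw [Nat.cofinite_eq_atTop, Filter.tendsto_def]
  intro U hU
  rcases Valued.mem_nhds_zero.mp hU with ⟨γ, hγ⟩
  set D := -(WithZero.log (MonoidWithZeroHom.ValueGroup₀.embedding γ.1) - 1) with hD₀
  have hD : WithZero.exp (-D) < MonoidWithZeroHom.ValueGroup₀.embedding γ.1 := by
    rw [← WithZero.lt_log_iff_exp_lt (by simp), hD₀]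
    simp
  obtain ⟨N, hN⟩ := del_ge m e D
  rw [Filter.mem_atTop_sets]
  refine ⟨N, fun k hk => ?_⟩
  apply hγ
  show Valued.v.restrict (tm m e (k + c)) < γ.1
  rw [Valued.v.restrict_lt_iff_lt_embedding]
  have hv : Valued.v (tm m e (k+c)) ≤ WithZero.exp (-(del m e (k+c))) :=
    (LaurentSeries.valuation_le_iff_coeff_lt_eq_zero ℚ).mpr
      (fun n hn => tm_coeff_lt m e _ hn)
  refine lt_of_le_of_lt hv (lt_of_le_of_lt ?_ hD)
  rw [WithZero.exp_le_exp]
  have := hN (k + c) (by omega)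
  omega


def NN (e : ℤ) : ℕ := (max 0 (-e)).toNat

theorem Itet_eq' (m e : ℤ) : Itet m e = ∑' k : ℕ, tm m e (k + NN e) := rfl

theorem R2 (m e : ℤ) :
    Itet m e = -(Thalf ^ (1 - m - e) * Itet (m-1) (e+1)) + Thalf ^ (-e) * Itet (m-1) e := by
  have hC : Summable (fun k : ℕ => Thalf ^ (-e) * tm (m-1) e (k + NN e)) :=
    (summable_tm (m-1) e (NN e)).mul_left _
  have hCeq : ∀ k : ℕ, tm m e (k + NN e) * Thalf ^ (2 * ((k + NN e : ℕ) : ℤ)) =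
      Thalf ^ (-e) * tm (m-1) e (k + NN e) := fun k => T2 m e (k + NN e)
  have hB : Summable
      (fun k : ℕ => tm m e (k + NN e) * (1 - Thalf ^ (2 * ((k + NN e : ℕ) : ℤ)))) := by
    have h := (summable_tm m e (NN e)).sub (hC.congr (fun k => (hCeq k).symm))
    exact h.congr (fun k => by ring)
  have hsplit : Itet m e
      = (∑' k : ℕ, tm m e (k + NN e) * (1 - Thalf ^ (2 * ((k + NN e : ℕ) : ℤ))))
        + ∑' k : ℕ, Thalf ^ (-e) * tm (m-1) e (k + NN e) := by
    rw [Itet_eq', ← hB.tsum_add hC]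
    exact tsum_congr fun k => by rw [← hCeq k]; ring
  have hCsum : (∑' k : ℕ, Thalf ^ (-e) * tm (m-1) e (k + NN e))
      = Thalf ^ (-e) * Itet (m-1) e := by
    rw [tsum_mul_left, ← Itet_eq']
  have hBsum : (∑' k : ℕ, tm m e (k + NN e) * (1 - Thalf ^ (2 * ((k + NN e : ℕ) : ℤ))))
      = -(Thalf ^ (1 - m - e) * Itet (m-1) (e+1)) := by
    rcases le_or_gt 0 e with he | he
    · have hN0z : NN e = 0 := by simp [NN]; omega
      have hN1 : NN (e+1) = 0 := by simp [NN]; omega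
      rw [hB.tsum_eq_zero_add]
      have hzero : tm m e (0 + NN e) * (1 - Thalf ^ (2 * (((0 + NN e : ℕ)) : ℤ))) = 0 := by
        rw [hN0z]
        norm_num
      rw [hzero, zero_add]
      have heq : ∀ k : ℕ, tm m e ((k+1) + NN e) * (1 - Thalf ^ (2 * (((k+1) + NN e : ℕ) : ℤ)))
          = -(Thalf ^ (1-m-e) * tm (m-1) (e+1) (k + NN (e+1))) := by
        intro k
        rw [hN0z, hN1]
        rw [show ((k:ℕ)+1) + 0 = k + 1 from rfl, show (k:ℕ) + 0 = k from rfl,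
          show (2 * (((k+1 : ℕ)) : ℤ)) = 2 * ((k:ℤ) + 1) from by push_cast; ring]
        exact T1 m e k
      rw [tsum_congr heq, tsum_neg, tsum_mul_left, ← Itet_eq']
    · have hNpos : 1 ≤ NN e := by simp [NN]; omega
      have hN1 : NN (e+1) = NN e - 1 := by simp [NN]; omega
      have heq : ∀ k : ℕ, tm m e (k + NN e) * (1 - Thalf ^ (2 * ((k + NN e : ℕ) : ℤ)))
          = -(Thalf ^ (1-m-e) * tm (m-1) (e+1) (k + NN (e+1))) := by
        intro k
        rw [hN1]
        rw [show k + NN e = (k + (NN e - 1)) + 1 from by omega,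
          show (2 * ((((k + (NN e - 1)) + 1 : ℕ)) : ℤ))
            = 2 * (((k + (NN e - 1) : ℕ) : ℤ) + 1) from by push_cast; ring,
          show k + (NN e - 1) = k + (NN e - 1) from rfl]
        exact T1 m e (k + (NN e - 1))
      rw [tsum_congr heq, tsum_neg, tsum_mul_left, ← Itet_eq']
  rw [hsplit, hBsum, hCsum]


theorem ter_swap (s : ℚ) (z : ℤ) (u v : ℕ) : ter s z u v = ter s z v u := by
  rw [ter, ter, mul_comm (qPoch u) (qPoch v)]

theorem negT_ne : (-Thalf : L) ≠ 0 := neg_ne_zero.mpr Thalf_ne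

theorem negT_zpow (z : ℤ) :
    (-Thalf : L) ^ z = HahnSeries.single z ((-1:ℚ)^z) := by
  rcases Int.even_or_odd z with hz | hz
  · rw [hz.neg_zpow Thalf, hz.neg_one_zpow (α := ℚ), Tzpow]
  · rw [hz.neg_zpow Thalf, hz.neg_one_zpow (α := ℚ), Tzpow, single_neg']

theorem sgl_mul (a b : ℤ) (r t : ℚ) (X : L) :
    HahnSeries.single a r * (HahnSeries.single b t * X) = HahnSeries.single (a+b) (r*t) * X := by
  rw [← mul_assoc, single_one_mul]

theorem negOne_zpow_mul (a b : ℤ) : (-1:ℚ)^a * (-1:ℚ)^b = (-1:ℚ)^(a+b) :=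
  (zpow_add₀ (by norm_num) a b).symm

theorem negOne_zpow_succ (a : ℤ) : (-1:ℚ)^(a+1) = -(-1:ℚ)^a := by
  rw [zpow_add₀ (by norm_num : (-1:ℚ) ≠ 0), zpow_one]
  ring

theorem negOne_pow_sub (n n₀ : ℕ) (e : ℤ) (h : (n:ℤ) = (n₀:ℤ) + e) :
    ((-1:ℚ)^n) = (-1:ℚ)^e * (-1:ℚ)^n₀ := by
  have h1 : ((-1:ℚ))^n = ((-1:ℚ))^((n:ℤ)) := by rw [zpow_natCast]
  have h2 : ((-1:ℚ))^n₀ = ((-1:ℚ))^((n₀:ℤ)) := by rw [zpow_natCast]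
  rw [h1, h2, h, negOne_zpow_mul, add_comm]

theorem NN_cast (e : ℤ) : ((NN e : ℕ) : ℤ) = max 0 (-e) :=
  Int.toNat_of_nonneg (le_max_left _ _)

theorem tm_tri_base_term (e : ℤ) (n n₀ : ℕ) (h : (n:ℤ) = (n₀:ℤ) + e) :
    tm e (-e) n = (-Thalf)^e * tm 0 e n₀ := by
  rw [negT_zpow, tm_eq_ter, tm_eq_ter, ter_eq_single_mul, ter_eq_single_mul, ← mul_assoc,
    single_one_mul]
  rw [show ((n:ℤ) + -e).toNat = n₀ from by omega,
    show (((n₀:ℤ) + e)).toNat = n from by omega,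
    show del e (-e) n = e + del 0 e n₀ from by rw [del, del, h]; ring,
    negOne_pow_sub n n₀ e h, mul_comm (qPoch n₀) (qPoch n)]

theorem tri_base (e : ℤ) : Itet e (-e) = (-Thalf)^e * Itet 0 e := by
  rw [Itet_eq', Itet_eq', ← tsum_mul_left]
  refine tsum_congr fun k => tm_tri_base_term e _ _ ?_
  push_cast [NN_cast]
  omega


theorem negOne_zpow_pred (a : ℤ) : (-1:ℚ)^(a-1) = -(-1:ℚ)^a := by
  have h := negOne_zpow_succ (a-1)
  rw [sub_add_cancel] at h
  linarith

theorem sm (a b c : ℤ) (r t u : ℚ) (h1 : a + b = c) (h2 : r * t = u) :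
    (HahnSeries.single a r : L) * HahnSeries.single b t = HahnSeries.single c u := by
  rw [single_one_mul, h1, h2]

theorem comb (p q : ℤ) (A B : L) :
    -(HahnSeries.single (-p-q) (1:ℚ) * (HahnSeries.single (-q-1) ((-1:ℚ)^(-q-1)) *
        (-(HahnSeries.single (p+1) (1:ℚ) * A) + HahnSeries.single (q+p+1) (1:ℚ) * B)))
      + HahnSeries.single (-q) (1:ℚ) * (HahnSeries.single (-q) ((-1:ℚ)^(-q)) * A)
    = HahnSeries.single (-q) ((-1:ℚ)^(-q)) * B := by
  have m12 : (HahnSeries.single (-p-q) (1:ℚ) : L) * HahnSeries.single (-q-1) ((-1:ℚ)^(-q-1))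
      = HahnSeries.single (-p + (-2*q) - 1) ((-1:ℚ)^(-q-1)) :=
    sm _ _ _ _ _ _ (by ring) (by ring)
  have h1 : (HahnSeries.single (-p-q) (1:ℚ) : L) * HahnSeries.single (-q-1) ((-1:ℚ)^(-q-1))
        * HahnSeries.single (p+1) (1:ℚ)
      = HahnSeries.single (-q + -q) ((-1:ℚ)^(-q-1)) := by
    rw [m12]; exact sm _ _ _ _ _ _ (by ring) (by ring)
  have h2 : (HahnSeries.single (-p-q) (1:ℚ) : L) * HahnSeries.single (-q-1) ((-1:ℚ)^(-q-1))
        * HahnSeries.single (q+p+1) (1:ℚ)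
      = HahnSeries.single (-q) ((-1:ℚ)^(-q-1)) := by
    rw [m12]; exact sm _ _ _ _ _ _ (by ring) (by ring)
  have h3 : (HahnSeries.single (-q) (1:ℚ) : L) * HahnSeries.single (-q) ((-1:ℚ)^(-q))
      = HahnSeries.single (-q + -q) ((-1:ℚ)^(-q)) :=
    sm _ _ _ _ _ _ (by ring) (by ring)
  have hs : (HahnSeries.single (-q + -q) ((-1:ℚ)^(-q-1)) : L)
      = -HahnSeries.single (-q + -q) ((-1:ℚ)^(-q)) := by
    rw [negOne_zpow_pred (-q), single_neg']
  have hs' : (HahnSeries.single (-q) ((-1:ℚ)^(-q-1)) : L)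
      = -HahnSeries.single (-q) ((-1:ℚ)^(-q)) := by
    rw [negOne_zpow_pred (-q), single_neg']
  linear_combination A * h1 - B * h2 + A * h3 + A * hs - B * hs'


theorem triality : ∀ (m : ℕ) (e : ℤ),
    Itet (m:ℤ) e = (-Thalf) ^ (-e) * Itet e (-e - (m:ℤ)) := by
  intro m
  induction m with
  | zero =>
    intro e
    rw [Nat.cast_zero, sub_zero, tri_base e, ← mul_assoc, ← zpow_add₀ negT_ne,
      neg_add_cancel, zpow_zero, one_mul]
  | succ n ih =>
    intro e
    have hR2 := R2 ((n:ℤ)+1) e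
    rw [show (n:ℤ)+1-1 = (n:ℤ) from by ring,
      show (1:ℤ)-((n:ℤ)+1)-e = -(n:ℤ)-e from by ring] at hR2
    have hR2' := R2 (e+1) (-e-(n:ℤ)-1)
    rw [show e+1-1 = e from by ring,
      show -e-(n:ℤ)-1+1 = -e-(n:ℤ) from by ring,
      show (1:ℤ)-(e+1)-(-e-(n:ℤ)-1) = (n:ℤ)+1 from by ring,
      show -(-e-(n:ℤ)-1) = e+(n:ℤ)+1 from by ring] at hR2'
    have ihe := ih e
    have ihe1 := ih (e+1)
    rw [show -(e+1)-(n:ℤ) = -e-(n:ℤ)-1 from by ring,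
      show (-(e+1) : ℤ) = -e-1 from by ring] at ihe1
    rw [show ((n+1:ℕ):ℤ) = (n:ℤ)+1 from by push_cast; ring,
      show -e-((n:ℤ)+1) = -e-(n:ℤ)-1 from by ring,
      hR2, ihe, ihe1, hR2']
    simp only [negT_zpow, Tzpow]
    exact comb (n:ℤ) e _ _


theorem del_mono (m e : ℤ) (h : m ≤ ((NN e : ℕ) : ℤ)) {k : ℕ} (hk : 1 ≤ k) :
    del m e (NN e) < del m e (k + NN e) := by
  have hk' : (1:ℤ) ≤ (k:ℤ) := by exact_mod_cast hk
  have key : 1 ≤ (k:ℤ) * (2*((NN e : ℕ):ℤ) + k + 1 - 2*m) := by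
    have h2 : (1:ℤ) ≤ 2*((NN e : ℕ):ℤ) + k + 1 - 2*m := by omega
    nlinarith
  have expand : del m e (k + NN e) - del m e (NN e)
      = (k:ℤ) * (2*((NN e : ℕ):ℤ) + k + 1 - 2*m) := by
    rw [del, del]; push_cast; ring
  linarith

theorem easy_lt (m e : ℤ) (h : m ≤ ((NN e : ℕ) : ℤ)) :
    (∀ d : ℤ, d < del m e (NN e) → (Itet m e).coeff d = 0) ∧
    (Itet m e).coeff (del m e (NN e)) = (-1:ℚ)^(NN e) := by
  have hs := summable_tm m e (NN e)
  constructor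
  · intro d hd
    rw [Itet_eq', coeff_tsum hs d]
    have hz : ∀ k : ℕ, (tm m e (k + NN e)).coeff d = 0 := by
      intro k
      apply tm_coeff_lt
      rcases Nat.eq_zero_or_pos k with hk | hk
      · subst hk; simpa using hd
      · exact lt_trans hd (del_mono m e h hk)
    simp only [hz, tsum_zero]
  · rw [Itet_eq', coeff_tsum hs _, tsum_eq_single 0 ?_]
    · rw [Nat.zero_add, tm_coeff_self]
    · intro k hk
      exact tm_coeff_lt m e _ (del_mono m e h (Nat.one_le_iff_ne_zero.mpr hk))

theorem negOne_zpow_ne (z : ℤ) : ((-1:ℚ)^z) ≠ 0 := zpow_ne_zero z (by norm_num)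

theorem negOne_zpow_even (x : ℤ) (h : Even x) : (-1:ℚ)^x = 1 := h.neg_one_zpow

theorem negOne_zpow_eq_of_even_sub {x y : ℤ} (h : Even (x - y)) :
    (-1:ℚ)^x = (-1:ℚ)^y := by
  obtain ⟨k, hk⟩ := h
  rw [show x = y + (k + k) from by omega, ← negOne_zpow_mul,
    negOne_zpow_even _ ⟨k, rfl⟩, mul_one]

theorem coeff_single_mul (z : ℤ) (r : ℚ) (f : L) (d : ℤ) :
    (HahnSeries.single z r * f).coeff d = r * f.coeff (d - z) := by
  have h2 := HahnSeries.coeff_single_mul_add (r := r) (x := f) (a := d - z) (b := z)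
  rw [show d - z + z = d from by ring] at h2
  exact h2

theorem Jtet_coeff (a b c d : ℤ) :
    (Jtet a b c).coeff d = (-1:ℚ)^(-b) * (Itet (b-c) (a-b)).coeff (d + b) := by
  rw [Jtet, negT_zpow, coeff_single_mul, show d - -b = d + b from by ring]


theorem Jtet_easy (a b c : ℤ) (h : b - c ≤ max 0 (b - a)) :
    (∀ d : ℤ, d < -b + del (b-c) (a-b) (NN (a-b)) → (Jtet a b c).coeff d = 0) ∧
    (Jtet a b c).coeff (-b + del (b-c) (a-b) (NN (a-b)))
      = (-1:ℚ)^(-b) * (-1:ℚ)^(NN (a-b)) := by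
  have hNN : ((NN (a-b) : ℕ) : ℤ) = max 0 (-(a-b)) := NN_cast _
  have h' : b - c ≤ ((NN (a-b) : ℕ) : ℤ) := by omega
  obtain ⟨h1, h2⟩ := easy_lt (b-c) (a-b) h'
  constructor
  · intro d hd
    rw [Jtet_coeff, h1 (d+b) (by omega)]
    ring
  · rw [Jtet_coeff, show -b + del (b-c) (a-b) (NN (a-b)) + b
      = del (b-c) (a-b) (NN (a-b)) from by ring, h2]

theorem Jtet_cyc (a b c : ℤ) (hca : c < a) (hcb : c < b) :
    Jtet a b c = HahnSeries.single (-a) ((-1:ℚ)^(-a)) * Itet (a-b) (c-a) := by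
  have ht := triality (b-c).toNat (a-b)
  rw [show (((b-c).toNat : ℕ) : ℤ) = b - c from Int.toNat_of_nonneg (by omega)] at ht
  rw [show -(a-b) - (b-c) = c-a from by ring] at ht
  rw [Jtet, ht, negT_zpow, negT_zpow, ← mul_assoc,
    sm (-b) (-(a-b)) (-a) _ _ ((-1:ℚ)^(-a)) (by ring)
      (by rw [negOne_zpow_mul, show -b + -(a-b) = -a from by ring])]

end TetProof

/-- For integers `a, b, c` with `m = min(a,b,c)`, the lowest term of `J_Δ(a,b,c)` has
`q`-degree `((a-m)(b-m) + (b-m)(c-m) + (c-m)(a-m) - m)/2`, i.e. `T`-degree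
`(a-m)(b-m) + (b-m)(c-m) + (c-m)(a-m) - m` where `T = q^{1/2}`, and its coefficient
is `(-1)^m`. -/
theorem stmt_8 (a b c : ℤ) :
    let m := min a (min b c)
    let D := (a - m) * (b - m) + (b - m) * (c - m) + (c - m) * (a - m) - m
    (∀ d : ℤ, d < D → (Jtet a b c).coeff d = 0) ∧
    (Jtet a b c).coeff D = (-1 : ℚ) ^ m := by
  intro m D
  have hm : m = min a (min b c) := rfl
  have hD : D = (a - m) * (b - m) + (b - m) * (c - m) + (c - m) * (a - m) - m := rfl
  open TetProof in
  rcases le_or_gt (min a b) c with hc | hc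
  · have hle : b - c ≤ max 0 (b - a) := by omega
    obtain ⟨h1, h2⟩ := TetProof.Jtet_easy a b c hle
    have hNN : ((TetProof.NN (a-b) : ℕ) : ℤ) = max 0 (-(a-b)) := TetProof.NN_cast _
    have hdel : TetProof.del (b-c) (a-b) (TetProof.NN (a-b)) = D + b := by
      rcases le_total b a with hba | hab
      · have hz : ((TetProof.NN (a-b) : ℕ) : ℤ) = 0 := by omega
        have hmb : m = b := by omega
        simp only [TetProof.del]
        rw [hz, hD, hmb]
        ring
      · have hz : ((TetProof.NN (a-b) : ℕ) : ℤ) = b - a := by omega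
        have hma : m = a := by omega
        simp only [TetProof.del]
        rw [hz, hD, hma]
        ring
    constructor
    · intro d hd
      exact h1 d (by omega)
    · have hsign : (-1:ℚ)^(-b) * (-1:ℚ)^(TetProof.NN (a-b)) = (-1:ℚ)^m := by
        rw [show ((-1:ℚ)^(TetProof.NN (a-b) : ℕ)) = (-1:ℚ)^((TetProof.NN (a-b) : ℕ):ℤ) from
          (zpow_natCast _ _).symm, TetProof.negOne_zpow_mul]
        apply TetProof.negOne_zpow_eq_of_even_sub
        rcases le_total b a with hba | hab
        · exact ⟨-b, by omega⟩
        · exact ⟨-a, by omega⟩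
      rw [show D = -b + TetProof.del (b-c) (a-b) (TetProof.NN (a-b)) from by omega, h2, hsign]
  · have hJ := TetProof.Jtet_cyc a b c (by omega) (by omega)
    have hcoeff : ∀ d : ℤ, (Jtet a b c).coeff d
        = (-1:ℚ)^(-a) * (Itet (a-b) (c-a)).coeff (d + a) := by
      intro d
      rw [hJ, TetProof.coeff_single_mul, show d - -a = d + a from by ring]
    have hNN : ((TetProof.NN (c-a) : ℕ):ℤ) = a - c := by rw [TetProof.NN_cast]; omega
    obtain ⟨h1, h2⟩ := TetProof.easy_lt (a-b) (c-a) (by omega)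
    have hmc : m = c := by omega
    have hdel : TetProof.del (a-b) (c-a) (TetProof.NN (c-a)) = D + a := by
      simp only [TetProof.del]
      rw [hNN, hD, hmc]
      ring
    constructor
    · intro d hd
      rw [hcoeff, h1 (d+a) (by omega)]
      ring
    · rw [hcoeff, show D + a = TetProof.del (a-b) (c-a) (TetProof.NN (c-a)) from by omega, h2]
      rw [show ((-1:ℚ)^(TetProof.NN (c-a) : ℕ)) = (-1:ℚ)^((TetProof.NN (c-a) : ℕ):ℤ) from
        (zpow_natCast _ _).symm, TetProof.negOne_zpow_mul]
      apply TetProof.negOne_zpow_eq_of_even_sub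
      exact ⟨-c, by omega⟩
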